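/- (Ratio limits in the proof of Lemma 2.2.) Let (x_n, y_n)_{n≥0} be a sequence of positive pairs following the explicit SG recursion with x0 > y0 > 0. Then there exist C > 0 and δ ∈ (0, 1) such that y_n/x_n ≤ C·δ^n for all n ≥ 0, and moreover x_n/x_{n−1} → 2/3 and y_n/y_{n−1} → 1/2 as n → ∞. -/

import Mathlib

noncomputable section

/-- `N(x, y) = √(4x² + 6xy + 6y²)`. -/
def NSG (x y : ℝ) : ℝ := Real.sqrt (4 * x ^ 2 + 6 * x * y + 6 * y ^ 2)

/-- A sequence of positive pairs following the explicit SG recursion. -/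
def FollowsSG (X Y : ℕ → ℝ) : Prop :=
  (∀ n, 0 < X n ∧ 0 < Y n) ∧
  ∀ n, X (n + 1) = (14 * X n + 3 * Y n - 2 * NSG (X n) (Y n)) / 15 ∧
       Y (n + 1) = (-2 * X n + Y n + NSG (X n) (Y n)) / 5

lemma NSG_nonneg (x y : ℝ) : 0 ≤ NSG x y := Real.sqrt_nonneg _

lemma NSG_sq (x y : ℝ) (hx : 0 ≤ x) (hy : 0 ≤ y) :
    NSG x y ^ 2 = 4 * x ^ 2 + 6 * x * y + 6 * y ^ 2 :=
  Real.sq_sqrt (by nlinarith [sq_nonneg x, sq_nonneg y, mul_nonneg hx hy])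

lemma NSG_lt (x y : ℝ) (hy : 0 < y) (hxy : y < x) : NSG x y < 4 * x := by
  have hx : 0 < x := hy.trans hxy
  have h2 := NSG_sq x y hx.le hy.le
  nlinarith [NSG_nonneg x y, h2]

lemma keySG (x y : ℝ) (hy : 0 < y) (hxy : y < x) :
    3 * x * (4 * x + y) * (-2 * x + y + NSG x y) ≤
      y * (3 * x + 2 * y) * (14 * x + 3 * y - 2 * NSG x y) := by
  have hx : 0 < x := hy.trans hxy
  set N := NSG x y with hN
  have hN2 : N ^ 2 = 4 * x ^ 2 + 6 * x * y + 6 * y ^ 2 := NSG_sq x y hx.le hy.le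
  have hN0 : 0 ≤ N := NSG_nonneg x y
  set Q : ℝ := 12 * x ^ 2 + 9 * x * y + 4 * y ^ 2 with hQ
  set R : ℝ := y * (3 * x + 2 * y) * (14 * x + 3 * y) + 3 * x * (4 * x + y) * (2 * x - y)
    with hR
  have hQpos : 0 < Q := by nlinarith
  have hL : 0 ≤ N * Q := mul_nonneg hN0 hQpos.le
  have hRpos : 0 ≤ R := by nlinarith
  have hfac : R ^ 2 - (N * Q) ^ 2 =
      30 * y ^ 2 * (x - y) * (2 * x ^ 3 + 5 * x ^ 2 * y + 6 * x * y ^ 2 + 2 * y ^ 3) := by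
    rw [hQ, hR]
    linear_combination (-(12 * x ^ 2 + 9 * x * y + 4 * y ^ 2) ^ 2) * hN2
  have h1 : (0:ℝ) < x - y := sub_pos.2 hxy
  have h2 : (0:ℝ) < 2 * x ^ 3 + 5 * x ^ 2 * y + 6 * x * y ^ 2 + 2 * y ^ 3 := by positivity
  have hprod : (0:ℝ) ≤ 30 * y ^ 2 * (x - y) * (2 * x ^ 3 + 5 * x ^ 2 * y + 6 * x * y ^ 2 + 2 * y ^ 3) :=
    mul_nonneg (mul_nonneg (by positivity) h1.le) h2.le
  have hsq : (N * Q) ^ 2 ≤ R ^ 2 := by linarith [hfac, hprod]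
  have hLR : N * Q ≤ R := le_of_pow_le_pow_left₀ two_ne_zero hRpos hsq
  nlinarith [hLR]

/-- The ratio function for `X`. -/
def FSG (r : ℝ) : ℝ := (14 + 3 * r - 2 * Real.sqrt (4 + 6 * r + 6 * r ^ 2)) / 15

/-- The ratio function for `Y`. -/
def GSG (r : ℝ) : ℝ :=
  6 * (1 + r) / (5 * (Real.sqrt (4 + 6 * r + 6 * r ^ 2) + 2)) + 1 / 5

lemma NSG_eq (x y : ℝ) (hx : 0 < x) :
    NSG x y = x * Real.sqrt (4 + 6 * (y / x) + 6 * (y / x) ^ 2) := by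
  rw [NSG, show 4 * x ^ 2 + 6 * x * y + 6 * y ^ 2
      = x ^ 2 * (4 + 6 * (y / x) + 6 * (y / x) ^ 2) by field_simp,
    Real.sqrt_mul (sq_nonneg x), Real.sqrt_sq hx.le]

lemma sqrt_four : Real.sqrt 4 = 2 := by
  rw [show (4:ℝ) = 2 ^ 2 by norm_num, Real.sqrt_sq (by norm_num)]

lemma Fratio (x y : ℝ) (hx : 0 < x) :
    (14 * x + 3 * y - 2 * NSG x y) / 15 / x = FSG (y / x) := by
  rw [NSG_eq x y hx, FSG]
  field_simp

lemma Gaux (r : ℝ) (hr : 0 < r) :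
    (-2 + r + Real.sqrt (4 + 6 * r + 6 * r ^ 2)) / (5 * r) = GSG r := by
  set s := Real.sqrt (4 + 6 * r + 6 * r ^ 2) with hs
  have hs2 : s ^ 2 = 4 + 6 * r + 6 * r ^ 2 := Real.sq_sqrt (by positivity)
  have hs0 : 0 ≤ s := Real.sqrt_nonneg _
  have hsd : s + 2 ≠ 0 := by positivity
  rw [GSG, ← hs]
  field_simp
  ring_nf
  linear_combination hs2

lemma Gratio (x y : ℝ) (hx : 0 < x) (hy : 0 < y) :
    (-2 * x + y + NSG x y) / 5 / y = GSG (y / x) := by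
  have hr : 0 < y / x := div_pos hy hx
  rw [NSG_eq x y hx, ← Gaux (y / x) hr]
  field_simp

theorem stmt11 (X Y : ℕ → ℝ) (h : FollowsSG X Y) (h0 : Y 0 < X 0) :
    (∃ C δ : ℝ, 0 < C ∧ 0 < δ ∧ δ < 1 ∧ ∀ n, Y n / X n ≤ C * δ ^ n) ∧
    Filter.Tendsto (fun n => X (n + 1) / X n) Filter.atTop (nhds (2 / 3)) ∧
    Filter.Tendsto (fun n => Y (n + 1) / Y n) Filter.atTop (nhds (1 / 2)) := by
  obtain ⟨hpos, hrec⟩ := h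
  set r0 := Y 0 / X 0 with hr0def
  have hr0pos : 0 < r0 := div_pos (hpos 0).2 (hpos 0).1
  have hr0lt : r0 < 1 := (div_lt_one (hpos 0).1).2 h0
  set δ := (3 + 2 * r0) / (4 + r0) with hδdef
  have hδpos : 0 < δ := by positivity
  have hδlt1 : δ < 1 := by rw [hδdef, div_lt_one (by linarith)]; linarith
  have main : ∀ n, Y n < X n ∧ Y n / X n ≤ r0 * δ ^ n := by
    intro n
    induction n with
    | zero => exact ⟨h0, by simp [hr0def]⟩
    | succ n ih =>
      obtain ⟨hlt, hle⟩ := ih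
      have hx := (hpos n).1
      have hy := (hpos n).2
      have hx' := (hpos (n + 1)).1
      have hy' := (hpos (n + 1)).2
      obtain ⟨hX, hY⟩ := hrec n
      have hδn1 : δ ^ n ≤ 1 := pow_le_one₀ hδpos.le hδlt1.le
      have hYr0 : Y n ≤ r0 * X n := by
        have h1 : Y n / X n ≤ r0 := le_trans hle (by nlinarith)
        rwa [div_le_iff₀ hx] at h1
      refine ⟨?_, ?_⟩
      · have hN := NSG_lt (X n) (Y n) hy hlt
        rw [hX, hY]
        linarith [NSG_nonneg (X n) (Y n)]
      · have hk := keySG (X n) (Y n) hy hlt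
        have h1 : Y (n + 1) / X (n + 1)
            ≤ (Y n * (3 * X n + 2 * Y n)) / (X n * (4 * X n + Y n)) := by
          rw [div_le_div_iff₀ hx' (by positivity), hX, hY]
          nlinarith [hk]
        have hstep : 3 * X n + 2 * Y n ≤ δ * (4 * X n + Y n) := by
          rw [hδdef, div_mul_eq_mul_div, le_div_iff₀ (by linarith)]
          nlinarith [hYr0]
        have h2 : (Y n * (3 * X n + 2 * Y n)) / (X n * (4 * X n + Y n))
            ≤ δ * (Y n / X n) := by
          rw [div_le_iff₀ (by positivity)]
          have hxx : δ * (Y n / X n) * (X n * (4 * X n + Y n))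
              = δ * (4 * X n + Y n) * Y n := by field_simp
          rw [hxx]
          nlinarith [mul_le_mul_of_nonneg_right hstep hy.le]
        calc Y (n + 1) / X (n + 1) ≤ (Y n * (3 * X n + 2 * Y n)) / (X n * (4 * X n + Y n)) := h1
          _ ≤ δ * (Y n / X n) := h2
          _ ≤ δ * (r0 * δ ^ n) := by nlinarith [hle]
          _ = r0 * δ ^ (n + 1) := by ring
  have hrtend : Filter.Tendsto (fun n => Y n / X n) Filter.atTop (nhds 0) := by
    have hgeo : Filter.Tendsto (fun n : ℕ => r0 * δ ^ n) Filter.atTop (nhds 0) := by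
      have := (tendsto_pow_atTop_nhds_zero_of_lt_one hδpos.le hδlt1).const_mul r0
      simpa using this
    exact squeeze_zero (fun n => (div_pos (hpos n).2 (hpos n).1).le)
      (fun n => (main n).2) hgeo
  refine ⟨⟨r0, δ, hr0pos, hδpos, hδlt1, fun n => (main n).2⟩, ?_, ?_⟩
  · have hFcont : ContinuousAt FSG 0 := by
      unfold FSG
      fun_prop
    have hXeq : ∀ n, X (n + 1) / X n = FSG (Y n / X n) := by
      intro n
      rw [(hrec n).1]
      exact Fratio (X n) (Y n) (hpos n).1
    have hF0 : FSG 0 = 2 / 3 := by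
      simp [FSG, sqrt_four]
      norm_num
    have := (hFcont.tendsto).comp hrtend
    rw [hF0] at this
    exact this.congr (fun n => (hXeq n).symm)
  · have hd0 : (5 : ℝ) * (Real.sqrt (4 + 6 * 0 + 6 * 0 ^ 2) + 2) ≠ 0 := by
      norm_num
    have hGcont : ContinuousAt GSG 0 := by
      apply ContinuousAt.add _ continuousAt_const
      apply ContinuousAt.div (by fun_prop) (by fun_prop)
      simpa using hd0
    have hYeq : ∀ n, Y (n + 1) / Y n = GSG (Y n / X n) := by
      intro n
      rw [(hrec n).2]
      exact Gratio (X n) (Y n) (hpos n).1 (hpos n).2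
    have hG0 : GSG 0 = 1 / 2 := by
      simp [GSG, sqrt_four]
      norm_num
    have := (hGcont.tendsto).comp hrtend
    rw [hG0] at this
    exact this.congr (fun n => (hYeq n).symm)
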